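/- In any complex normed space (X, ‖·‖), the angle ∠ has the following properties for all x, y ≠ 0 and all real r, s > 0: ∠(x,x) = 0; ∠(−x,x) = π; ∠(x,y) = conj(∠(y,x)); ∠(r·x, s·y) = ∠(x,y); ∠(−x,−y) = ∠(x,y); and ∠(x,y) + ∠(−x,y) = π. -/

import Mathlib

/-- The real area hyperbolic cosine, `arcosh x = log (x + √(x² − 1))`. -/
noncomputable def arcosh (x : ℝ) : ℝ := Real.log (x + Real.sqrt (x ^ 2 - 1))

/-- `G₋ = √((r²+s²−1)² + 4s²) − (r²+s²)` for `z = r + i·s`. -/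
noncomputable def Gminus (z : ℂ) : ℝ :=
  Real.sqrt ((z.re ^ 2 + z.im ^ 2 - 1) ^ 2 + 4 * z.im ^ 2) - (z.re ^ 2 + z.im ^ 2)

/-- `G₊ = √((r²+s²−1)² + 4s²) + (r²+s²)` for `z = r + i·s`. -/
noncomputable def Gplus (z : ℂ) : ℝ :=
  Real.sqrt ((z.re ^ 2 + z.im ^ 2 - 1) ^ 2 + 4 * z.im ^ 2) + (z.re ^ 2 + z.im ^ 2)

/-- The complex arcsine: `arcsin(r+is) = ½·(sgn r · arccos G₋ + i · sgn s · arcosh G₊)`. -/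
noncomputable def carcsin (z : ℂ) : ℂ :=
  (1 / 2 : ℂ) *
    (((Real.sign z.re * Real.arccos (Gminus z) : ℝ) : ℂ) +
      Complex.I * ((Real.sign z.im * arcosh (Gplus z) : ℝ) : ℂ))

/-- The complex arccosine: `arccos z = π/2 − arcsin z`. -/
noncomputable def carccos (z : ℂ) : ℂ := ((Real.pi / 2 : ℝ) : ℂ) - carcsin z
/-- The continuous product `⟨x|y⟩` in a complex normed space. -/
noncomputable def cprod {X : Type*} [NormedAddCommGroup X] [NormedSpace ℂ X] (x y : X) : ℂ :=
  open scoped Classical in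
  if x = 0 ∨ y = 0 then 0
  else
    ((‖x‖ * ‖y‖ : ℝ) : ℂ) * (1 / 4 : ℂ) *
      (((‖((‖x‖⁻¹ : ℝ) : ℂ) • x + ((‖y‖⁻¹ : ℝ) : ℂ) • y‖ ^ 2
          - ‖((‖x‖⁻¹ : ℝ) : ℂ) • x - ((‖y‖⁻¹ : ℝ) : ℂ) • y‖ ^ 2 : ℝ) : ℂ)
        + Complex.I *
          ((‖((‖x‖⁻¹ : ℝ) : ℂ) • x + Complex.I • (((‖y‖⁻¹ : ℝ) : ℂ) • y)‖ ^ 2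
            - ‖((‖x‖⁻¹ : ℝ) : ℂ) • x - Complex.I • (((‖y‖⁻¹ : ℝ) : ℂ) • y)‖ ^ 2 : ℝ) : ℂ))
/-- The complex angle `∠(x,y) = arccos(⟨x|y⟩ / (‖x‖·‖y‖))`. -/
noncomputable def cangle {X : Type*} [NormedAddCommGroup X] [NormedSpace ℂ X] (x y : X) : ℂ :=
  carccos (cprod x y / ((‖x‖ * ‖y‖ : ℝ) : ℂ))

/-! ### Auxiliary lemmas -/

lemma Gminus_neg (z : ℂ) : Gminus (-z) = Gminus z := by
  simp [Gminus, Complex.neg_re, Complex.neg_im, neg_sq]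

lemma Gplus_neg (z : ℂ) : Gplus (-z) = Gplus z := by
  simp [Gplus, Complex.neg_re, Complex.neg_im, neg_sq]

lemma Gminus_conj (z : ℂ) : Gminus (starRingEnd ℂ z) = Gminus z := by
  simp [Gminus, Complex.conj_re, Complex.conj_im, neg_sq]

lemma Gplus_conj (z : ℂ) : Gplus (starRingEnd ℂ z) = Gplus z := by
  simp [Gplus, Complex.conj_re, Complex.conj_im, neg_sq]

lemma carcsin_neg (z : ℂ) : carcsin (-z) = - carcsin z := by
  simp only [carcsin, Gminus_neg, Gplus_neg, Complex.neg_re, Complex.neg_im, Real.sign_neg]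
  push_cast
  ring

lemma carcsin_conj (z : ℂ) : carcsin (starRingEnd ℂ z) = starRingEnd ℂ (carcsin z) := by
  simp only [carcsin, Gminus_conj, Gplus_conj, Complex.conj_re, Complex.conj_im, Real.sign_neg,
    map_mul, map_add, map_one, map_div₀, map_ofNat, Complex.conj_ofReal, Complex.conj_I]
  push_cast
  ring

lemma carccos_conj (z : ℂ) : carccos (starRingEnd ℂ z) = starRingEnd ℂ (carccos z) := by
  simp only [carccos, carcsin_conj, map_sub, Complex.conj_ofReal]

lemma carccos_add_carccos_neg (z : ℂ) : carccos z + carccos (-z) = ((Real.pi : ℝ) : ℂ) := by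
  simp only [carccos, carcsin_neg]
  push_cast
  ring

lemma carccos_one : carccos 1 = 0 := by
  have hG : Gminus 1 = -1 := by simp [Gminus]
  simp [carccos, carcsin, hG, Real.arccos_neg_one, Real.sign_one]
  ring

lemma carccos_neg_one : carccos (-1) = ((Real.pi : ℝ) : ℂ) := by
  have := carccos_add_carccos_neg 1
  rw [carccos_one] at this
  simpa using this

section VecLemmas

variable {X : Type*} [NormedAddCommGroup X] [NormedSpace ℂ X]

/-- The normalized product of two (unit) vectors. -/
noncomputable def F (u v : X) : ℂ :=
  (1 / 4 : ℂ) *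
    (((‖u + v‖ ^ 2 - ‖u - v‖ ^ 2 : ℝ) : ℂ)
      + Complex.I * ((‖u + Complex.I • v‖ ^ 2 - ‖u - Complex.I • v‖ ^ 2 : ℝ) : ℂ))

lemma F_self {u : X} (hu : ‖u‖ = 1) : F u u = 1 := by
  have h1 : ‖u + u‖ = 2 := by
    rw [← two_smul ℂ u, norm_smul]; simp [hu]
  have hI : ‖(1 + Complex.I : ℂ)‖ = Real.sqrt 2 := by
    rw [Complex.norm_def, Complex.normSq_apply]
    norm_num
  have h2 : ‖u + Complex.I • u‖ = Real.sqrt 2 := by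
    rw [show u + Complex.I • u = (1 + Complex.I) • u by rw [add_smul, one_smul], norm_smul, hI, hu,
      mul_one]
  have h3 : ‖u - Complex.I • u‖ = Real.sqrt 2 := by
    have hI' : ‖(1 - Complex.I : ℂ)‖ = Real.sqrt 2 := by
      rw [Complex.norm_def, Complex.normSq_apply]
      norm_num
    rw [show u - Complex.I • u = (1 - Complex.I) • u by rw [sub_smul, one_smul], norm_smul, hI', hu,
      mul_one]
  simp [F, h1, h2, h3]
  norm_num

lemma F_neg_left (u v : X) : F (-u) v = - F u v := by
  rw [F, F, show -u + v = -(u - v) by abel, show -u - v = -(u + v) by abel,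
    show -u + Complex.I • v = -(u - Complex.I • v) by abel,
    show -u - Complex.I • v = -(u + Complex.I • v) by abel,
    norm_neg, norm_neg, norm_neg, norm_neg]
  push_cast
  ring

lemma F_neg_neg (u v : X) : F (-u) (-v) = F u v := by
  rw [F, F, smul_neg, show -u + -v = -(u + v) by abel, show -u - -v = -(u - v) by abel,
    show -u + -(Complex.I • v) = -(u + Complex.I • v) by abel,
    show -u - -(Complex.I • v) = -(u - Complex.I • v) by abel,
    norm_neg, norm_neg, norm_neg, norm_neg]

lemma F_symm (u v : X) : F v u = starRingEnd ℂ (F u v) := by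
  have e1 : v + Complex.I • u = Complex.I • (u - Complex.I • v) := by
    rw [smul_sub, smul_smul, Complex.I_mul_I, neg_one_smul]; abel
  have e2 : v - Complex.I • u = (-Complex.I) • (u + Complex.I • v) := by
    rw [smul_add, smul_smul, neg_mul, Complex.I_mul_I, neg_neg, one_smul, neg_smul]; abel
  rw [F, F, show v + u = u + v by abel, norm_sub_rev v u, e1, e2, norm_smul, norm_smul]
  simp only [map_mul, map_add, map_sub, map_div₀, map_one, map_ofNat, Complex.conj_ofReal,
    Complex.conj_I, Complex.norm_I, norm_neg, one_mul]
  push_cast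
  ring

lemma cangle_eq {x y : X} (hx : x ≠ 0) (hy : y ≠ 0) :
    cangle x y = carccos (F (((‖x‖⁻¹ : ℝ) : ℂ) • x) (((‖y‖⁻¹ : ℝ) : ℂ) • y)) := by
  have hx' : (‖x‖ : ℝ) ≠ 0 := norm_ne_zero_iff.mpr hx
  have hy' : (‖y‖ : ℝ) ≠ 0 := norm_ne_zero_iff.mpr hy
  have h : ((‖x‖ * ‖y‖ : ℝ) : ℂ) ≠ 0 := by
    push_cast
    exact mul_ne_zero (Complex.ofReal_ne_zero.mpr hx') (Complex.ofReal_ne_zero.mpr hy')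
  have key : ∀ N E : ℂ, N ≠ 0 → N * (1 / 4 : ℂ) * E / N = (1 / 4 : ℂ) * E := by
    intro N E hN; field_simp
  unfold cangle cprod F
  rw [if_neg (by tauto)]
  congr 1
  exact key _ _ h

lemma unit_norm {x : X} (hx : x ≠ 0) : ‖((‖x‖⁻¹ : ℝ) : ℂ) • x‖ = 1 := by
  have hx' : (‖x‖ : ℝ) ≠ 0 := norm_ne_zero_iff.mpr hx
  rw [norm_smul, Complex.norm_real, Real.norm_eq_abs, abs_of_nonneg (by positivity),
    inv_mul_cancel₀ hx']

lemma unit_neg (x : X) : ((‖(-x)‖⁻¹ : ℝ) : ℂ) • (-x) = -(((‖x‖⁻¹ : ℝ) : ℂ) • x) := by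
  rw [norm_neg, smul_neg]

lemma unit_smul {x : X} {r : ℝ} (hx : x ≠ 0) (hr : 0 < r) :
    ((‖(r : ℂ) • x‖⁻¹ : ℝ) : ℂ) • ((r : ℂ) • x) = ((‖x‖⁻¹ : ℝ) : ℂ) • x := by
  have hx' : (‖x‖ : ℝ) ≠ 0 := norm_ne_zero_iff.mpr hx
  rw [norm_smul, smul_smul]
  congr 1
  have hrc : (r : ℂ) ≠ 0 := Complex.ofReal_ne_zero.mpr hr.ne'
  have hxc : (‖x‖ : ℂ) ≠ 0 := Complex.ofReal_ne_zero.mpr hx'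
  rw [Complex.norm_real, Real.norm_eq_abs, abs_of_pos hr]
  push_cast [mul_inv]
  field_simp

end VecLemmas

/-- properties (An 2)–(An 7) of the angle in a complex normed space. -/
theorem stmt10 {X : Type*} [NormedAddCommGroup X] [NormedSpace ℂ X] :
    (∀ x : X, x ≠ 0 → cangle x x = 0) ∧
    (∀ x : X, x ≠ 0 → cangle (-x) x = ((Real.pi : ℝ) : ℂ)) ∧
    (∀ x y : X, x ≠ 0 → y ≠ 0 → cangle x y = starRingEnd ℂ (cangle y x)) ∧
    (∀ (x y : X) (r s : ℝ), x ≠ 0 → y ≠ 0 → 0 < r → 0 < s →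
      cangle ((r : ℂ) • x) ((s : ℂ) • y) = cangle x y) ∧
    (∀ x y : X, x ≠ 0 → y ≠ 0 → cangle (-x) (-y) = cangle x y) ∧
    (∀ x y : X, x ≠ 0 → y ≠ 0 → cangle x y + cangle (-x) y = ((Real.pi : ℝ) : ℂ)) := by
  refine ⟨?_, ?_, ?_, ?_, ?_, ?_⟩
  · intro x hx
    rw [cangle_eq hx hx, F_self (unit_norm hx), carccos_one]
  · intro x hx
    have hnx : -x ≠ 0 := neg_ne_zero.mpr hx
    rw [cangle_eq hnx hx, unit_neg, F_neg_left, F_self (unit_norm hx), carccos_neg_one]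
  · intro x y hx hy
    rw [cangle_eq hx hy, cangle_eq hy hx, F_symm, carccos_conj]
  · intro x y r s hx hy hr hs
    have hrx : (r : ℂ) • x ≠ 0 := smul_ne_zero (Complex.ofReal_ne_zero.mpr hr.ne') hx
    have hsy : (s : ℂ) • y ≠ 0 := smul_ne_zero (Complex.ofReal_ne_zero.mpr hs.ne') hy
    rw [cangle_eq hrx hsy, unit_smul hx hr, unit_smul hy hs, ← cangle_eq hx hy]
  · intro x y hx hy
    have hnx : -x ≠ 0 := neg_ne_zero.mpr hx
    have hny : -y ≠ 0 := neg_ne_zero.mpr hy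
    rw [cangle_eq hnx hny, unit_neg, unit_neg, F_neg_neg, ← cangle_eq hx hy]
  · intro x y hx hy
    have hnx : -x ≠ 0 := neg_ne_zero.mpr hx
    rw [cangle_eq hx hy, cangle_eq hnx hy, unit_neg, F_neg_left]
    exact carccos_add_carccos_neg _
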